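/- Let A be an M×N complex matrix, α > 0 and β ≠ 0 real, and suppose A/α = Σ_{k=1}^{r} σ_k w_k v_k† where σ_k > 0, {w_k}_{k=1}^{r} is an orthonormal family in ℂ^M and {v_k}_{k=1}^{r} is an orthonormal family in ℂ^N. Let b ∈ ℂ^M lie in the span of {w_1, …, w_r}, let x = Σ_{k=1}^{r} (⟨w_k, b⟩/(α σ_k)) v_k be the exact solution of A x = b in the span of {v_k}, and suppose P: ℝ → ℝ satisfies |P(σ_k) − β/σ_k| ≤ |β| δ for every k, for some δ ≥ 0. Then the vector x̂ = (1/(αβ)) Σ_{k=1}^{r} P(σ_k) ⟨w_k, b⟩ v_k satisfies ‖x̂ − x‖ ≤ (δ/α) ‖b‖. -/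

import Mathlib

open Matrix

/-- The Euclidean norm of a finite complex vector. -/
noncomputable def euclNorm {N : ℕ} (x : Fin N → ℂ) : ℝ :=
  Real.sqrt (∑ i, ‖x i‖ ^ 2)

lemma sum_dot {m r : ℕ} (f : Fin r → Fin m → ℂ) (w : Fin m → ℂ) :
    (∑ k, f k) ⬝ᵥ w = ∑ k, f k ⬝ᵥ w := by
  simp only [dotProduct, Finset.sum_apply, Finset.sum_mul]
  rw [Finset.sum_comm]

lemma dot_sum {m r : ℕ} (w : Fin m → ℂ) (f : Fin r → Fin m → ℂ) :
    w ⬝ᵥ (∑ k, f k) = ∑ k, w ⬝ᵥ f k := by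
  simp only [dotProduct, Finset.sum_apply, Finset.mul_sum]
  rw [Finset.sum_comm]

lemma dot_ortho {N r : ℕ} (v : Fin r → (Fin N → ℂ))
    (hv : ∀ k l, star (v k) ⬝ᵥ v l = if k = l then 1 else 0) (c : Fin r → ℂ) :
    star (∑ k, c k • v k) ⬝ᵥ (∑ k, c k • v k) = ∑ k, star (c k) * c k := by
  rw [star_sum, sum_dot]
  refine Finset.sum_congr rfl fun k _ => ?_
  rw [star_smul, dot_sum]
  simp only [smul_dotProduct, dotProduct_smul, hv, smul_eq_mul, mul_ite, mul_one, mul_zero]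
  simp [Finset.sum_ite_eq, mul_comm]

lemma star_mul_self_re (z : ℂ) : (star z * z).re = ‖z‖ ^ 2 := by
  rw [Complex.star_def, Complex.sq_norm]
  simp [Complex.normSq_apply, Complex.mul_re]

lemma sum_sq_eq {n : ℕ} (z : Fin n → ℂ) : ∑ i, ‖z i‖ ^ 2 = (star z ⬝ᵥ z).re := by
  simp only [dotProduct, Pi.star_apply, Complex.re_sum]
  exact Finset.sum_congr rfl fun i _ => (star_mul_self_re (z i)).symm

/-- **Error bound for the approximate QSVT solution.** If `A/α = Σ σ_k w_k v_k†` is an SVD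
with `σ_k > 0`, `b` lies in the span of the `w_k`, `x` is the exact solution of `Ax = b`
in the span of the `v_k`, and `|P(σ_k) - β/σ_k| ≤ |β| δ` for all `k`, then the approximate
solution `xhat = (1/(αβ)) Σ_k P(σ_k) ⟨w_k, b⟩ v_k` satisfies `‖xhat - x‖ ≤ (δ/α) ‖b‖`. -/
theorem qsvt_linear_system_error_bound {M N r : ℕ}
    (A : Matrix (Fin M) (Fin N) ℂ) (α β : ℝ) (hα : 0 < α) (hβ : β ≠ 0)
    (σ : Fin r → ℝ) (hσ : ∀ k, 0 < σ k)
    (w : Fin r → (Fin M → ℂ)) (v : Fin r → (Fin N → ℂ))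
    (hw : ∀ k l, star (w k) ⬝ᵥ w l = if k = l then 1 else 0)
    (hv : ∀ k l, star (v k) ⬝ᵥ v l = if k = l then 1 else 0)
    (hSVD : ((α : ℂ))⁻¹ • A = ∑ k : Fin r, (σ k : ℂ) • vecMulVec (w k) (star (v k)))
    (b : Fin M → ℂ) (hb : b ∈ Submodule.span ℂ (Set.range w))
    (x : Fin N → ℂ)
    (hx : x = ∑ k : Fin r, ((star (w k) ⬝ᵥ b) / ((α * σ k : ℝ) : ℂ)) • v k)
    (P : ℝ → ℝ) (δ : ℝ) (hδ : 0 ≤ δ)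
    (hP : ∀ k, |P (σ k) - β / σ k| ≤ |β| * δ)
    (xhat : Fin N → ℂ)
    (hxhat : xhat = ((α * β : ℝ) : ℂ)⁻¹ •
      ∑ k : Fin r, (((P (σ k) : ℝ) : ℂ) * (star (w k) ⬝ᵥ b)) • v k) :
    euclNorm (xhat - x) ≤ (δ / α) * euclNorm b := by
  obtain ⟨a, ha⟩ := (Submodule.mem_span_range_iff_exists_fun ℂ).mp hb
  have hawb : ∀ j, star (w j) ⬝ᵥ b = a j := by
    intro j
    rw [← ha, dot_sum]
    simp only [dotProduct_smul, hw, smul_eq_mul, mul_ite, mul_one, mul_zero]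
    simp
  set c : Fin r → ℂ := fun k =>
    (((α * β : ℝ) : ℂ)⁻¹ * ((P (σ k) : ℝ) : ℂ) - ((α * σ k : ℝ) : ℂ)⁻¹) * a k with hc
  have hdiff : xhat - x = ∑ k, c k • v k := by
    rw [hxhat, hx, Finset.smul_sum, ← Finset.sum_sub_distrib]
    refine Finset.sum_congr rfl fun k _ => ?_
    rw [hawb, smul_smul, ← sub_smul, hc]
    congr 1
    ring
  have h1 : ∑ i, ‖(xhat - x) i‖ ^ 2 = ∑ k, ‖c k‖ ^ 2 := by
    rw [hdiff, sum_sq_eq, dot_ortho v hv]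
    simp only [Complex.re_sum]
    exact Finset.sum_congr rfl fun k _ => star_mul_self_re (c k)
  have h2 : ∑ i, ‖b i‖ ^ 2 = ∑ k, ‖a k‖ ^ 2 := by
    rw [← ha, sum_sq_eq, dot_ortho w hw]
    simp only [Complex.re_sum]
    exact Finset.sum_congr rfl fun k _ => star_mul_self_re (a k)
  have hck : ∀ k, ‖c k‖ ^ 2 ≤ (δ / α) ^ 2 * ‖a k‖ ^ 2 := by
    intro k
    have hσk := hσ k
    have hcast : (((α * β : ℝ) : ℂ)⁻¹ * ((P (σ k) : ℝ) : ℂ) - ((α * σ k : ℝ) : ℂ)⁻¹)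
        = (((α * β)⁻¹ * P (σ k) - (α * σ k)⁻¹ : ℝ) : ℂ) := by push_cast; ring
    have hkey : (α * β)⁻¹ * P (σ k) - (α * σ k)⁻¹ = (P (σ k) - β / σ k) / (α * β) := by
      field_simp
    have habs : |(α * β)⁻¹ * P (σ k) - (α * σ k)⁻¹| ≤ δ / α := by
      rw [hkey, abs_div, abs_mul, abs_of_pos hα]
      rw [div_le_div_iff₀ (by positivity) hα]
      calc |P (σ k) - β / σ k| * α ≤ (|β| * δ) * α :=
            mul_le_mul_of_nonneg_right (hP k) hα.le
        _ = δ * (α * |β|) := by ring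
    have hnorm : ‖c k‖ ≤ (δ / α) * ‖a k‖ := by
      rw [hc]
      simp only [norm_mul, hcast, Complex.norm_real, Real.norm_eq_abs]
      exact mul_le_mul_of_nonneg_right habs (norm_nonneg _)
    calc ‖c k‖ ^ 2 ≤ ((δ / α) * ‖a k‖) ^ 2 := by
          have := norm_nonneg (c k)
          nlinarith [norm_nonneg (a k)]
      _ = (δ / α) ^ 2 * ‖a k‖ ^ 2 := by ring
  have hsum : ∑ k, ‖c k‖ ^ 2 ≤ (δ / α) ^ 2 * ∑ k, ‖a k‖ ^ 2 := by
    rw [Finset.mul_sum]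
    exact Finset.sum_le_sum fun k _ => hck k
  have hδα : 0 ≤ δ / α := div_nonneg hδ hα.le
  unfold euclNorm
  rw [h1, h2]
  calc Real.sqrt (∑ k, ‖c k‖ ^ 2) ≤ Real.sqrt ((δ / α) ^ 2 * ∑ k, ‖a k‖ ^ 2) :=
        Real.sqrt_le_sqrt hsum
    _ = (δ / α) * Real.sqrt (∑ k, ‖a k‖ ^ 2) := by
        rw [Real.sqrt_mul (sq_nonneg _), Real.sqrt_sq hδα]
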